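/- If f is a bent Boolean function on F_2^{2m} with m ≥ 1, then the weight of f equals 2^{2m-1} - 2^{m-1} or 2^{2m-1} + 2^{m-1}. -/

import Mathlib

open Finset

/-- Inner product on `F_2^n`. -/
def dotp {n : ℕ} (x y : Fin n → ZMod 2) : ZMod 2 := ∑ i, x i * y i

/-- Hamming weight of a Boolean function: the cardinality of its support. -/
def wt {n : ℕ} (f : (Fin n → ZMod 2) → ZMod 2) : ℕ :=
  (Finset.univ.filter fun x => f x = 1).card

/-- Walsh–Hadamard transform of a Boolean function. -/
def walsh {n : ℕ} (f : (Fin n → ZMod 2) → ZMod 2) (x : Fin n → ZMod 2) : ℤ :=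
  ∑ y : Fin n → ZMod 2, (-1 : ℤ) ^ (f y + dotp x y).val

/-- A Boolean function on `F_2^(2m)` is bent if its Walsh–Hadamard transform has constant
absolute value `2^m`. -/
def IsBent {m : ℕ} (f : (Fin (2 * m) → ZMod 2) → ZMod 2) : Prop :=
  ∀ x, |walsh f x| = 2 ^ m

/-- The dual of a bent function: `f̂ x = 0` if `W_f x = 2^m`, and `1` otherwise
(for bent `f` the other case is exactly `W_f x = -2^m`). -/
def dual {m : ℕ} (f : (Fin (2 * m) → ZMod 2) → ZMod 2) :
    (Fin (2 * m) → ZMod 2) → ZMod 2 :=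
  fun x => if walsh f x = 2 ^ m then 0 else 1

/-- The weight class of a bent function on `F_2^(2m)`:
`0` if its weight is `2^(2m-1) - 2^(m-1)`, and `1` otherwise. -/
def wc {m : ℕ} (f : (Fin (2 * m) → ZMod 2) → ZMod 2) : ZMod 2 :=
  if wt f = 2 ^ (2 * m - 1) - 2 ^ (m - 1) then 0 else 1

/-- The Cayley graph of a Boolean function: distinct `x`, `y` are adjacent iff `f (x+y) = 1`. -/
def cayley {n : ℕ} (f : (Fin n → ZMod 2) → ZMod 2) : SimpleGraph (Fin n → ZMod 2) where
  Adj x y := x ≠ y ∧ f (x + y) = 1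
  symm := ⟨fun x y h => ⟨h.1.symm, by rw [add_comm]; exact h.2⟩⟩
  loopless := ⟨fun x h => h.1 rfl⟩

instance cayleyAdjDecidable {n : ℕ} (f : (Fin n → ZMod 2) → ZMod 2) :
    DecidableRel (cayley f).Adj :=
  fun x y => inferInstanceAs (Decidable (x ≠ y ∧ f (x + y) = 1))

/-- a bent function on `F_2^(2m)` (`m ≥ 1`) has weight
`2^(2m-1) - 2^(m-1)` or `2^(2m-1) + 2^(m-1)`. -/
theorem bent_weight {m : ℕ} (hm : 1 ≤ m) (f : (Fin (2 * m) → ZMod 2) → ZMod 2)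
    (hf : IsBent f) :
    wt f = 2 ^ (2 * m - 1) - 2 ^ (m - 1) ∨ wt f = 2 ^ (2 * m - 1) + 2 ^ (m - 1) := by
  have hz : ∀ z : ZMod 2, ((-1:ℤ))^z.val = 1 - 2 * (if z = 1 then 1 else 0) := by decide
  have key : walsh f 0 = 2 ^ (2 * m) - 2 * (wt f : ℤ) := by
    unfold walsh
    have hd : ∀ y, dotp (0 : Fin (2*m) → ZMod 2) y = 0 := by intro y; simp [dotp]
    simp_rw [hd, add_zero, hz]
    rw [Finset.sum_sub_distrib, Finset.sum_const, ← Finset.mul_sum, Finset.sum_boole]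
    simp [wt, Finset.card_univ]
  set a := 2 ^ (m - 1) with ha
  have ha1 : 2 ^ m = 2 * a := by
    rw [ha, ← pow_succ']; congr 1; omega
  have ha2 : 2 ^ (2 * m) = 4 * (a * a) := by
    have : 2 * m = (m - 1) + (m - 1) + 2 := by omega
    rw [this, pow_add, pow_add]; ring
  have ha3 : 2 ^ (2 * m - 1) = 2 * (a * a) := by
    have : 2 * m - 1 = (m - 1) + (m - 1) + 1 := by omega
    rw [this, pow_add, pow_add]; ring
  have ha4 : 1 ≤ a := Nat.one_le_two_pow
  have h0 := hf 0
  rw [key, abs_eq (by positivity)] at h0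
  set b := a * a with hb
  have ha1' : (2:ℤ) ^ m = 2 * (a : ℤ) := by exact_mod_cast ha1
  have ha2' : (2:ℤ) ^ (2 * m) = 4 * (b : ℤ) := by exact_mod_cast ha2
  have hab : a ≤ b := Nat.le_mul_of_pos_left a ha4
  rw [ha1', ha2'] at h0
  rw [ha3]
  rcases h0 with h | h <;> [left; right] <;> omega
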